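/- arXiv:1502.03317 — 3 statements merged into one kernel-verified Lean document; each statement's English description precedes it below -/
import Mathlib

section
/- Let d, m ≥ 1, let φ be a real-valued Schwartz function on ℝ^d, and let f₁, …, f_m, g be Schwartz functions on ℝ^d. Then for all x, ν ∈ ℝ^d and all t = (t₁,…,t_m), ξ = (ξ₁,…,ξ_m) ∈ (ℝ^d)^m: ∫_{(ℝ^d)^m} ∫_{ℝ^d} e^{−2πi (x̃·ν + Σ_{i=1}^m t̃_i·ξ_i)} · conj(∏_{i=1}^m f_i(x̃ − t̃_i)) · g(x̃) · (∏_{i=1}^m φ(x̃ − x − t̃_i + t_i)) · φ(x̃ − x) dx̃ dt̃ = conj(∏_{i=1}^m V_φ f_i(x − t_i, ξ_i)) · V_φ g(x, ν + Σ_{i=1}^m ξ_i). -/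
open MeasureTheory Complex
open scoped ENNReal NNReal RealInnerProductSpace

noncomputable section

abbrev Ed (d : ℕ) := EuclideanSpace ℝ (Fin d)

/-- `e2pi a = e^{2πi a}`. -/
def e2pi (a : ℝ) : ℂ := Complex.exp (2 * Real.pi * Complex.I * (a : ℂ))

/-- Short-time Fourier transform `V_φ f (t, ν)`. -/
def STFT (d : ℕ) (φ f : Ed d → ℂ) (t ν : Ed d) : ℂ :=
  ∫ y, f y * e2pi (-⟪y, ν⟫) * φ (y - t)

/-- The Gaussian window `e^{-‖x‖²}` as a complex-valued function. -/
def gauss (d : ℕ) : Ed d → ℂ := fun x => (Real.exp (-‖x‖ ^ 2) : ℝ)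

/-- `L^p`-type norm (`ℝ≥0∞`-valued) with essential supremum in case `p = ∞`. -/
def eNorm {α : Type*} [MeasurableSpace α] (μ : Measure α) (p : ℝ≥0∞) (F : α → ℝ≥0∞) : ℝ≥0∞ :=
  if p = ∞ then essSup F μ else (∫⁻ a, F a ^ p.toReal ∂μ) ^ (1 / p.toReal)

/-- Modulation space norm `‖f‖_{M^{p,q}}` with the Gaussian window. -/
def modNorm (d : ℕ) (p q : ℝ≥0∞) (f : Ed d → ℂ) : ℝ≥0∞ :=
  eNorm volume q fun ν => eNorm volume p fun t => (‖STFT d (gauss d) f t ν‖₊ : ℝ≥0∞)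

/-- The Gaussian window on `ℝ^{3d}`. -/
def gauss3 (d : ℕ) : Ed d × Ed d × Ed d → ℂ :=
  fun X => (Real.exp (-‖X.1‖ ^ 2 - ‖X.2.1‖ ^ 2 - ‖X.2.2‖ ^ 2) : ℝ)

/-- Symbol short-time Fourier transform of a symbol on `ℝ^{3d}`. -/
def symbSTFT (d : ℕ) (Φ σ : Ed d × Ed d × Ed d → ℂ) (x t₁ t₂ ξ₁ ξ₂ ν : Ed d) : ℂ :=
  ∫ X : Ed d × Ed d × Ed d,
    σ X * Φ (X.1 - x, X.2.1 - ξ₁, X.2.2 - ξ₂) *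
      e2pi (-(⟪X.1, ν⟫ - ⟪t₁, X.2.1⟫ - ⟪t₂, X.2.2⟫))

/-- Fourier transform. -/
def FT (d : ℕ) (f : Ed d → ℂ) (ξ : Ed d) : ℂ := ∫ y, f y * e2pi (-⟪y, ξ⟫)

/-- Bilinear pseudodifferential operator `T_σ`. -/
def biOp (d : ℕ) (σ : Ed d × Ed d × Ed d → ℂ) (f₁ f₂ : Ed d → ℂ) (x : Ed d) : ℂ :=
  ∫ ξ : Ed d × Ed d,
    e2pi ⟪x, ξ.1 + ξ.2⟫ * σ (x, ξ.1, ξ.2) * FT d f₁ ξ.1 * FT d f₂ ξ.2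


lemma e2pi_add (a b : ℝ) : e2pi (a + b) = e2pi a * e2pi b := by
  rw [e2pi, e2pi, e2pi, ← Complex.exp_add]
  push_cast
  ring_nf

lemma e2pi_sum {ι : Type*} (s : Finset ι) (a : ι → ℝ) :
    e2pi (∑ i ∈ s, a i) = ∏ i ∈ s, e2pi (a i) := by
  rw [e2pi]
  push_cast
  rw [Finset.mul_sum, Complex.exp_sum]
  rfl

lemma norm_e2pi (a : ℝ) : ‖e2pi a‖ = 1 := by
  rw [e2pi, Complex.norm_exp]
  have : (2 * Real.pi * Complex.I * (a : ℂ)).re = 0 := by simp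
  simp [this]

lemma conj_e2pi (a : ℝ) : (starRingEnd ℂ) (e2pi a) = e2pi (-a) := by
  have h : (2 * Real.pi * Complex.I * (a : ℂ)) =
      ((2 * Real.pi * a : ℝ) : ℂ) * Complex.I := by push_cast; ring
  have h2 : (2 * Real.pi * Complex.I * ((-a : ℝ) : ℂ)) =
      -(((2 * Real.pi * a : ℝ) : ℂ) * Complex.I) := by push_cast; ring
  rw [e2pi, e2pi, ← Complex.exp_conj, h, h2, map_mul, Complex.conj_I,
    Complex.conj_ofReal, mul_neg]

lemma continuous_e2pi : Continuous e2pi :=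
  Complex.continuous_exp.comp (by continuity)

/-- the fundamental STFT identity (Lemma `lemmaT_A` of the paper):
the `2(m+1)d`-dimensional integral factors into a product of short-time Fourier
transforms. -/
theorem stmt2 (d m : ℕ) (hd : 1 ≤ d) (hm : 1 ≤ m)
    (φ : SchwartzMap (Ed d) ℝ) (f : Fin m → SchwartzMap (Ed d) ℂ) (g : SchwartzMap (Ed d) ℂ)
    (x ν : Ed d) (t ξ : Fin m → Ed d) :
    (∫ T : Fin m → Ed d, ∫ X : Ed d,
        e2pi (-(⟪X, ν⟫ + ∑ i, ⟪T i, ξ i⟫)) *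
          (starRingEnd ℂ) (∏ i, f i (X - T i)) * g X *
          (∏ i, ((φ (X - x - T i + t i) : ℝ) : ℂ)) * ((φ (X - x) : ℝ) : ℂ))
      = (starRingEnd ℂ) (∏ i, STFT d (fun y => ((φ y : ℝ) : ℂ)) (⇑(f i)) (x - t i) (ξ i)) *
          STFT d (fun y => ((φ y : ℝ) : ℂ)) (⇑g) x (ν + ∑ i, ξ i) := by
  classical
  set w : Ed d → ℂ := fun y => ((φ y : ℝ) : ℂ) with hw
  have hwcont : Continuous w := Complex.continuous_ofReal.comp φ.continuous
  -- boundedness of the window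
  obtain ⟨C, hC0, hC⟩ := φ.decay 0 0
  have hwb : ∀ y, ‖w y‖ ≤ C := by
    intro y
    have h := hC y
    simp only [pow_zero, one_mul, norm_iteratedFDeriv_zero] at h
    simpa [hw, Complex.norm_real] using h
  set H : Fin m → Ed d → ℂ := fun i y =>
    (starRingEnd ℂ) (f i y) * e2pi ⟪y, ξ i⟫ * w (y - (x - t i)) with hH
  set G : Ed d → ℂ := fun X => g X * e2pi (-⟪X, ν + ∑ i, ξ i⟫) * w (X - x) with hG
  have hHcont : ∀ i, Continuous (H i) := by
    intro i
    exact ((continuous_conj.comp (f i).continuous).mul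
      (continuous_e2pi.comp (continuous_id.inner continuous_const))).mul
      (hwcont.comp (continuous_id.sub continuous_const))
  have hGcont : Continuous G :=
    (g.continuous.mul
      (continuous_e2pi.comp ((continuous_id.inner continuous_const).neg))).mul
      (hwcont.comp (continuous_id.sub continuous_const))
  have hHint : ∀ i, Integrable (H i) volume := by
    intro i
    refine Integrable.mono' (((f i).integrable).norm.const_mul C)
      (hHcont i).aestronglyMeasurable (Filter.Eventually.of_forall fun y => ?_)
    have : ‖H i y‖ = ‖f i y‖ * ‖w (y - (x - t i))‖ := by
      show ‖(starRingEnd ℂ) (f i y) * e2pi ⟪y, ξ i⟫ * w (y - (x - t i))‖ = _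
      rw [norm_mul, norm_mul, norm_e2pi, RCLike.norm_conj, mul_one]
    rw [this]
    calc ‖f i y‖ * ‖w (y - (x - t i))‖ ≤ ‖f i y‖ * C :=
          mul_le_mul_of_nonneg_left (hwb _) (norm_nonneg _)
      _ = C * ‖f i y‖ := mul_comm _ _
  have hGint : Integrable G volume := by
    refine Integrable.mono' ((g.integrable).norm.const_mul C)
      hGcont.aestronglyMeasurable (Filter.Eventually.of_forall fun y => ?_)
    have : ‖G y‖ = ‖g y‖ * ‖w (y - x)‖ := by
      show ‖g y * e2pi (-⟪y, ν + ∑ i, ξ i⟫) * w (y - x)‖ = _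
      rw [norm_mul, norm_mul, norm_e2pi, mul_one]
    rw [this]
    calc ‖g y‖ * ‖w (y - x)‖ ≤ ‖g y‖ * C :=
          mul_le_mul_of_nonneg_left (hwb _) (norm_nonneg _)
      _ = C * ‖g y‖ := mul_comm _ _
  -- joint integrability
  have hHpi : Integrable (fun Y : Fin m → Ed d => ∏ i, H i (Y i)) volume :=
    Integrable.fintype_prod fun i => hHint i
  have hF : Integrable
      (fun p : (Fin m → Ed d) × Ed d => (∏ i, H i (p.1 i)) * G p.2) volume := by
    rw [Measure.volume_eq_prod]
    exact hHpi.mul_prod hGint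
  -- the measure preserving change of variables
  haveI : (volume : Measure (Fin m → Ed d)).IsNegInvariant :=
    Measure.pi.isNegInvariant _
  have hshear : MeasurePreserving
      (fun p : Ed d × (Fin m → Ed d) => (p.1, fun i => p.1 - p.2 i))
      ((volume : Measure (Ed d)).prod (volume : Measure (Fin m → Ed d)))
      ((volume : Measure (Ed d)).prod (volume : Measure (Fin m → Ed d))) := by
    have hmeas : Measurable (Function.uncurry
        (fun (a : Ed d) (c : Fin m → Ed d) => (fun i => a - c i : Fin m → Ed d))) :=
      measurable_pi_lambda _ fun i =>
        measurable_fst.sub ((measurable_pi_apply i).comp measurable_snd)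
    have hmap : ∀ᵐ a : Ed d ∂(volume : Measure (Ed d)),
        Measure.map (fun c : Fin m → Ed d => (fun i => a - c i : Fin m → Ed d))
          volume = volume := by
      refine Filter.Eventually.of_forall fun a => ?_
      have h : (fun c : Fin m → Ed d => (fun i => a - c i : Fin m → Ed d))
          = (fun c : Fin m → Ed d => (fun _ => a) - c) := rfl
      rw [h]
      exact Measure.map_sub_left_eq_self volume _
    exact (MeasurePreserving.id _).skew_product hmeas hmap
  have hΦ : MeasurePreserving
      (fun p : (Fin m → Ed d) × Ed d => ((fun i => p.2 - p.1 i : Fin m → Ed d), p.2))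
      (volume : Measure ((Fin m → Ed d) × Ed d))
      (volume : Measure ((Fin m → Ed d) × Ed d)) := by
    rw [Measure.volume_eq_prod]
    have h1 := (Measure.measurePreserving_swap
      (μ := (volume : Measure (Ed d))) (ν := (volume : Measure (Fin m → Ed d)))).comp hshear
    have h2 := h1.comp (Measure.measurePreserving_swap
      (μ := (volume : Measure (Fin m → Ed d))) (ν := (volume : Measure (Ed d))))
    exact h2
  have hFΦ : Integrable
      (Function.uncurry fun T X => (∏ i, H i (X - T i)) * G X)
      (volume : Measure ((Fin m → Ed d) × Ed d)) := by
    have := (hΦ.integrable_comp (by rw [Measure.volume_eq_prod] at hF; exact hF.aestronglyMeasurable)).mpr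
      (by rw [Measure.volume_eq_prod] at hF; exact hF)
    exact this
  -- pointwise identity
  have key : ∀ (T : Fin m → Ed d) (X : Ed d),
      e2pi (-(⟪X, ν⟫ + ∑ i, ⟪T i, ξ i⟫)) *
          (starRingEnd ℂ) (∏ i, f i (X - T i)) * g X *
          (∏ i, ((φ (X - x - T i + t i) : ℝ) : ℂ)) * ((φ (X - x) : ℝ) : ℂ)
        = (∏ i, H i (X - T i)) * G X := by
    intro T X
    have harg : ∀ i : Fin m, X - x - T i + t i = X - T i - (x - t i) := fun i => by abel
    have hph : e2pi (∑ i, ⟪X - T i, ξ i⟫) * e2pi (-⟪X, ν + ∑ i, ξ i⟫)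
        = e2pi (-(⟪X, ν⟫ + ∑ i, ⟪T i, ξ i⟫)) := by
      rw [← e2pi_add]
      congr 1
      simp only [inner_sub_left, inner_add_right, inner_sum, Finset.sum_sub_distrib]
      ring
    simp only [hH, hG, hw, map_prod]
    rw [Finset.prod_mul_distrib, Finset.prod_mul_distrib, ← e2pi_sum]
    simp only [harg]
    rw [← hph]
    ring
  simp only [key]
  -- Fubini and factorization
  rw [integral_integral_swap hFΦ]
  have inner_eq : ∀ X : Ed d,
      (∫ T : Fin m → Ed d, (∏ i, H i (X - T i)) * G X)
        = (∏ i, ∫ y, H i y) * G X := by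
    intro X
    rw [integral_mul_const]
    congr 1
    rw [MeasureTheory.volume_pi, MeasureTheory.integral_fintype_prod_eq_prod (ι := Fin m) (fun i y => H i (X - y))]
    exact Finset.prod_congr rfl fun i _ =>
      integral_sub_left_eq_self (H i) volume X
  simp only [inner_eq]
  rw [integral_const_mul]
  -- identify the factors
  have hGeq : (∫ X, G X) = STFT d w (⇑g) x (ν + ∑ i, ξ i) := rfl
  have hHeq : ∀ i, (∫ y, H i y)
      = (starRingEnd ℂ) (STFT d w (⇑(f i)) (x - t i) (ξ i)) := by
    intro i
    rw [STFT, ← integral_conj]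
    congr 1
    funext y
    simp only [hH, hw, map_mul, conj_e2pi, neg_neg, Complex.conj_ofReal]
  rw [hGeq]
  rw [Finset.prod_congr rfl fun i _ => hHeq i, ← map_prod]


end
end

section
/- Let d, m ≥ 1, let φ be a real-valued Schwartz function on ℝ^d, and let f₁, …, f_m, g be Schwartz functions on ℝ^d. Define the Rihaczek transform R(f₁,…,f_m; g)(x, ξ₁,…,ξ_m) = e^{2πi x·(ξ₁+⋯+ξ_m)} f̂₁(ξ₁)⋯f̂_m(ξ_m) conj(g(x)). Then for all x, ν ∈ ℝ^d and t = (t₁,…,t_m), ξ = (ξ₁,…,ξ_m) ∈ (ℝ^d)^m: |∫_{(ℝ^d)^m} ∫_{ℝ^d} e^{−2πi (x̃·ν + Σ_{i=1}^m t_i·ξ̃_i)} conj(R(f₁,…,f_m; g)(x̃, ξ̃)) · R(φ,…,φ; φ)(x̃ − x, ξ̃ − ξ) dx̃ dξ̃| = (∏_{i=1}^m |V_φ f_i(x + t_i, ξ_i)|) · |V_φ g(x, ν + Σ_{i=1}^m ξ_i)|. -/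
open MeasureTheory Complex
open scoped ENNReal NNReal RealInnerProductSpace

noncomputable section

/-- The Rihaczek transform `R(f₁,…,f_m; g)(x, ξ₁,…,ξ_m)`. -/
def rihaczek (d m : ℕ) (f : Fin m → Ed d → ℂ) (g : Ed d → ℂ)
    (x : Ed d) (ξ : Fin m → Ed d) : ℂ :=
  e2pi ⟪x, ∑ i, ξ i⟫ * (∏ i, FT d (f i) (ξ i)) * (starRingEnd ℂ) (g x)

open FourierTransform Real SchwartzMap in
lemma ft_eq' {d : ℕ} (h : Ed d → ℂ) : FT d h = 𝓕 h := by
  funext w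
  rw [FT, Real.fourier_eq']
  congr 1; funext v
  rw [smul_eq_mul, mul_comm]
  congr 1
  rw [e2pi]
  congr 1
  push_cast
  ring

open FourierTransform Real SchwartzMap in
lemma key_stft {d : ℕ} (φ : SchwartzMap (Ed d) ℝ) (f : SchwartzMap (Ed d) ℂ) (a ξ₀ : Ed d) :
    ∫ η, (starRingEnd ℂ) (FT d (⇑f) η) * FT d (fun y => ((φ y : ℝ) : ℂ)) (η - ξ₀) *
        e2pi (-⟪a, η⟫)
      = e2pi (-⟪a, ξ₀⟫) * (starRingEnd ℂ) (STFT d (fun y => ((φ y : ℝ) : ℂ)) (⇑f) a ξ₀) := by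
  set fc : SchwartzMap (Ed d) ℂ := fourierTransformCLM ℂ f with hfc_def
  have hfc : FT d (⇑f) = ⇑fc := by rw [ft_eq']; exact (SchwartzMap.fourier_coe f).symm
  have hinv : ∀ w : Ed d, (∫ η, fc η * e2pi ⟪w, η⟫) = f w := by
    intro w
    have h1 : 𝓕⁻ (𝓕 ⇑f) w = f w := by
      rw [Continuous.fourierInv_fourier_eq f.continuous f.integrable
        ((fourierTransformCLM ℂ f).integrable)]
    rw [← h1, Real.fourierInv_eq']
    congr 1; funext η
    rw [smul_eq_mul, mul_comm]
    congr 1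
    rw [e2pi]
    congr 1
    rw [real_inner_comm w η]
    push_cast
    ring
  have hint : Integrable (Function.uncurry fun (η z : Ed d) =>
      ((starRingEnd ℂ) (fc η) * e2pi (-⟪a, η⟫)) * (((φ z : ℝ) : ℂ) * e2pi (-⟪z, η - ξ₀⟫)))
      (volume.prod volume) := by
    apply Integrable.mono' (fc.integrable.norm.mul_prod φ.integrable.norm)
    · apply Continuous.aestronglyMeasurable
      apply Continuous.mul
      · exact ((Complex.continuous_conj.comp (fc.continuous.comp continuous_fst)).mul
          (continuous_e2pi.comp
            (continuous_inner.comp ((continuous_const (y := a)).prodMk continuous_fst)).neg))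
      · exact ((Complex.continuous_ofReal.comp (φ.continuous.comp continuous_snd)).mul
          (continuous_e2pi.comp
            (continuous_inner.comp
              (continuous_snd.prodMk (continuous_fst.sub continuous_const))).neg))
    · filter_upwards with p
      simp only [Function.uncurry]
      rw [norm_mul, norm_mul, norm_mul, norm_e2pi, norm_e2pi, mul_one, mul_one,
        RCLike.norm_conj, Complex.norm_real]
  calc (∫ η, (starRingEnd ℂ) (FT d (⇑f) η) * FT d (fun y => ((φ y : ℝ) : ℂ)) (η - ξ₀) *
        e2pi (-⟪a, η⟫))
      = ∫ η, ∫ z, ((starRingEnd ℂ) (fc η) * e2pi (-⟪a, η⟫)) *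
          (((φ z : ℝ) : ℂ) * e2pi (-⟪z, η - ξ₀⟫)) := by
        rw [hfc]
        congr 1; funext η
        rw [FT, integral_const_mul]
        ring
    _ = ∫ z, ∫ η, ((starRingEnd ℂ) (fc η) * e2pi (-⟪a, η⟫)) *
          (((φ z : ℝ) : ℂ) * e2pi (-⟪z, η - ξ₀⟫)) := integral_integral_swap hint
    _ = ∫ z, (((φ z : ℝ) : ℂ) * e2pi ⟪z, ξ₀⟫) * (starRingEnd ℂ) (f (z + a)) := by
        congr 1; funext z
        have h2 : ∀ η : Ed d, ((starRingEnd ℂ) (fc η) * e2pi (-⟪a, η⟫)) *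
            (((φ z : ℝ) : ℂ) * e2pi (-⟪z, η - ξ₀⟫))
            = (((φ z : ℝ) : ℂ) * e2pi ⟪z, ξ₀⟫) *
                (starRingEnd ℂ) (fc η * e2pi ⟪z + a, η⟫) := by
          intro η
          rw [map_mul, conj_e2pi]
          have h3 : e2pi (-⟪a, η⟫) * e2pi (-⟪z, η - ξ₀⟫)
              = e2pi ⟪z, ξ₀⟫ * e2pi (-⟪z + a, η⟫) := by
            rw [← e2pi_add, ← e2pi_add]
            congr 1
            simp only [inner_sub_right, inner_add_left]
            ring
          linear_combination ((starRingEnd ℂ) (fc η) * ((φ z : ℝ) : ℂ)) * h3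
        simp_rw [h2]
        rw [integral_const_mul, integral_conj, hinv (z + a)]
    _ = ∫ y, (((φ (y - a) : ℝ) : ℂ) * e2pi ⟪y - a, ξ₀⟫) * (starRingEnd ℂ) (f y) := by
        rw [← integral_sub_right_eq_self
          (fun z => (((φ z : ℝ) : ℂ) * e2pi ⟪z, ξ₀⟫) * (starRingEnd ℂ) (f (z + a))) a]
        simp only [sub_add_cancel]
    _ = e2pi (-⟪a, ξ₀⟫) * (starRingEnd ℂ) (STFT d (fun y => ((φ y : ℝ) : ℂ)) (⇑f) a ξ₀) := by
        rw [STFT, ← integral_conj, ← integral_const_mul]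
        congr 1; funext y
        simp only [map_mul, conj_e2pi, Complex.conj_ofReal]
        have h3 : e2pi ⟪y - a, ξ₀⟫ = e2pi (-⟪a, ξ₀⟫) * e2pi (- -⟪y, ξ₀⟫) := by
          rw [← e2pi_add]
          congr 1
          rw [inner_sub_left]
          ring
        linear_combination (((φ (y - a) : ℝ) : ℂ) * (starRingEnd ℂ) (f y)) * h3

/-- the absolute value of the symbol STFT of the Rihaczek transform
(with Rihaczek window) factors into a product of short-time Fourier transforms. -/
theorem stmt3 (d m : ℕ) (hd : 1 ≤ d) (hm : 1 ≤ m)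
    (φ : SchwartzMap (Ed d) ℝ) (f : Fin m → SchwartzMap (Ed d) ℂ) (g : SchwartzMap (Ed d) ℂ)
    (x ν : Ed d) (t ξ : Fin m → Ed d) :
    ‖∫ Ξ : Fin m → Ed d, ∫ X : Ed d,
        e2pi (-(⟪X, ν⟫ + ∑ i, ⟪t i, Ξ i⟫)) *
          (starRingEnd ℂ) (rihaczek d m (fun i => ⇑(f i)) (⇑g) X Ξ) *
          rihaczek d m (fun _ => fun y => ((φ y : ℝ) : ℂ)) (fun y => ((φ y : ℝ) : ℂ))
            (X - x) (fun i => Ξ i - ξ i)‖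
      = (∏ i, ‖STFT d (fun y => ((φ y : ℝ) : ℂ)) (⇑(f i)) (x + t i) (ξ i)‖) *
          ‖STFT d (fun y => ((φ y : ℝ) : ℂ)) (⇑g) x (ν + ∑ i, ξ i)‖ := by
  classical
  set Φ : Ed d → ℂ := fun y => ((φ y : ℝ) : ℂ) with hΦ
  set A : Fin m → Ed d → ℂ := fun i η =>
    (starRingEnd ℂ) (FT d (⇑(f i)) η) * FT d Φ (η - ξ i) * e2pi (-⟪x + t i, η⟫) with hA
  have hinner : ∀ Ξ : Fin m → Ed d,
      (∫ X : Ed d,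
        e2pi (-(⟪X, ν⟫ + ∑ i, ⟪t i, Ξ i⟫)) *
          (starRingEnd ℂ) (rihaczek d m (fun i => ⇑(f i)) (⇑g) X Ξ) *
          rihaczek d m (fun _ => Φ) Φ (X - x) (fun i => Ξ i - ξ i))
      = (∏ i, A i (Ξ i)) * (e2pi ⟪x, ∑ i, ξ i⟫ * STFT d Φ (⇑g) x (ν + ∑ i, ξ i)) := by
    intro Ξ
    have hpt : ∀ X : Ed d,
        e2pi (-(⟪X, ν⟫ + ∑ i, ⟪t i, Ξ i⟫)) *
          (starRingEnd ℂ) (rihaczek d m (fun i => ⇑(f i)) (⇑g) X Ξ) *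
          rihaczek d m (fun _ => Φ) Φ (X - x) (fun i => Ξ i - ξ i)
        = ((∏ i, A i (Ξ i)) * e2pi ⟪x, ∑ i, ξ i⟫) *
            (g X * e2pi (-⟪X, ν + ∑ i, ξ i⟫) * Φ (X - x)) := by
      intro X
      have hph : e2pi (-(⟪X, ν⟫ + ∑ i, ⟪t i, Ξ i⟫)) * e2pi (-⟪X, ∑ i, Ξ i⟫) *
          e2pi ⟪X - x, ∑ i, (Ξ i - ξ i)⟫
          = e2pi (∑ i, -⟪x + t i, Ξ i⟫) * e2pi ⟪x, ∑ i, ξ i⟫ *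
              e2pi (-⟪X, ν + ∑ i, ξ i⟫) := by
        rw [← e2pi_add, ← e2pi_add, ← e2pi_add, ← e2pi_add]
        congr 1
        simp only [inner_sub_left, inner_sub_right, inner_add_left, inner_add_right,
          inner_sum, Finset.sum_sub_distrib, Finset.sum_add_distrib, Finset.sum_neg_distrib]
        ring
      simp only [rihaczek, map_mul, map_prod, conj_e2pi, Complex.conj_conj, hΦ,
        Complex.conj_ofReal, hA]
      rw [Finset.prod_mul_distrib, Finset.prod_mul_distrib, ← e2pi_sum]
      linear_combination ((∏ i, (starRingEnd ℂ) (FT d (⇑(f i)) (Ξ i))) *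
        (∏ i, FT d (fun y => ((φ y : ℝ) : ℂ)) (Ξ i - ξ i)) * g X * ((φ (X - x) : ℝ) : ℂ)) * hph
    simp_rw [hpt]
    rw [integral_const_mul, STFT]
    ring
  have hAi : ∀ i : Fin m, (∫ η, A i η)
      = e2pi (-⟪x + t i, ξ i⟫) *
          (starRingEnd ℂ) (STFT d Φ (⇑(f i)) (x + t i) (ξ i)) := fun i => by
    simpa only [hA, hΦ] using key_stft φ (f i) (x + t i) (ξ i)
  have h1 : (∫ Ξ : Fin m → Ed d, ∫ X : Ed d,
        e2pi (-(⟪X, ν⟫ + ∑ i, ⟪t i, Ξ i⟫)) *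
          (starRingEnd ℂ) (rihaczek d m (fun i => ⇑(f i)) (⇑g) X Ξ) *
          rihaczek d m (fun _ => Φ) Φ (X - x) (fun i => Ξ i - ξ i))
      = (∏ i, ∫ η, A i η) *
          (e2pi ⟪x, ∑ i, ξ i⟫ * STFT d Φ (⇑g) x (ν + ∑ i, ξ i)) := by
    simp_rw [hinner]
    rw [integral_mul_const, MeasureTheory.integral_fintype_prod_volume_eq_prod]
  rw [h1, norm_mul, norm_mul, norm_e2pi, one_mul, norm_prod]
  congr 1
  exact Finset.prod_congr rfl fun i _ => by
    rw [hAi i, norm_mul, norm_e2pi, one_mul, RCLike.norm_conj]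
end
end

section
/- Let d ≥ 1 and let 1 ≤ p₀, p₁, p₂, r₀, r₁, r₂ ≤ ∞ satisfy: p₁ ≤ r₁, p₂ ≤ r₂, r₀ ≤ p₁ (i.e. 0 ≤ 1/r₀ − 1/p₁), 1/p₁ − 1/r₁ ≤ 1/r₀ − 1/p₂, and (1/p₁ − 1/r₁) + (1/p₂ − 1/r₂) = 1/r₀ − 1/p₀. Then for all f₁ ∈ L^{p₁}(ℝ^d), f₂ ∈ L^{p₂}(ℝ^d), g ∈ L^{p₀}(ℝ^d): (∫_{ℝ^d} (∫_{ℝ^d} (∫_{ℝ^d} |f₁(x−t₁) f₂(x−t₂) g(x)|^{r₀} dx)^{r₁/r₀} dt₁)^{r₂/r₁} dt₂)^{1/r₂} ≤ ‖g‖_{L^{p₀}} ‖f₁‖_{L^{p₁}} ‖f₂‖_{L^{p₂}}, with essential suprema replacing integrals for infinite exponents. -/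
open MeasureTheory Complex
open scoped ENNReal NNReal RealInnerProductSpace

noncomputable section

section EnormAux

variable {α : Type*} [MeasurableSpace α] {μ : Measure α}

lemma eNorm_congr_ae {p : ℝ≥0∞} {A B : α → ℝ≥0∞} (h : A =ᵐ[μ] B) :
    eNorm μ p A = eNorm μ p B := by
  unfold eNorm
  split_ifs with hp
  · exact essSup_congr_ae h
  · congr 1
    exact lintegral_congr_ae (h.mono fun x hx => by dsimp only; rw [hx])

lemma eNorm_mono {p : ℝ≥0∞} {A B : α → ℝ≥0∞} (h : ∀ x, A x ≤ B x) :
    eNorm μ p A ≤ eNorm μ p B := by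
  unfold eNorm
  split_ifs with hp
  · exact essSup_mono_ae (Filter.Eventually.of_forall h)
  · exact ENNReal.rpow_le_rpow
      (lintegral_mono fun x => ENNReal.rpow_le_rpow (h x) ENNReal.toReal_nonneg)
      (by positivity)

lemma eNorm_zero_fun {p : ℝ≥0∞} (hp : p ≠ 0) : eNorm μ p (fun _ => (0 : ℝ≥0∞)) = 0 := by
  unfold eNorm
  split_ifs with h
  · exact le_antisymm
      (essSup_le_of_ae_le 0 (Filter.Eventually.of_forall fun _ => le_rfl)) zero_le
  · have he : 0 < p.toReal := ENNReal.toReal_pos hp h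
    show (∫⁻ _x : α, (0:ℝ≥0∞) ^ p.toReal ∂μ) ^ (1 / p.toReal) = 0
    simp only [ENNReal.zero_rpow_of_pos he, lintegral_zero]
    exact ENNReal.zero_rpow_of_pos (one_div_pos.mpr he)

lemma eNorm_ae_zero {p : ℝ≥0∞} (hp : p ≠ 0) {A : α → ℝ≥0∞} (hA : AEMeasurable A μ)
    (h : eNorm μ p A = 0) : A =ᵐ[μ] 0 := by
  unfold eNorm at h
  split_ifs at h with htop
  · exact ENNReal.essSup_eq_zero_iff.mp h
  · have he : 0 < p.toReal := ENNReal.toReal_pos hp htop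
    have h' : ∫⁻ x, A x ^ p.toReal ∂μ = 0 := by
      rcases ENNReal.rpow_eq_zero_iff.mp h with ⟨h0, _⟩ | ⟨_, hlt⟩
      · exact h0
      · exfalso; have : (0:ℝ) < 1 / p.toReal := by positivity
        linarith
    have hz := (lintegral_eq_zero_iff' (hA.pow_const _)).mp h'
    filter_upwards [hz] with x hx
    have hx' : A x ^ p.toReal = 0 := hx
    rcases ENNReal.rpow_eq_zero_iff.mp hx' with ⟨h0, _⟩ | ⟨_, hlt⟩
    · exact h0
    · exfalso; linarith

lemma eNorm_mul_const_le {p : ℝ≥0∞} (hp : p ≠ 0) (A : α → ℝ≥0∞) {c : ℝ≥0∞} (hc : c ≠ ∞) :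
    eNorm μ p (fun x => A x * c) ≤ eNorm μ p A * c := by
  unfold eNorm
  split_ifs with htop
  · exact essSup_le_of_ae_le _ ((ENNReal.ae_le_essSup A).mono fun x hx => mul_le_mul_left hx c)
  · have he : 0 < p.toReal := ENNReal.toReal_pos hp htop
    refine le_of_eq ?_
    show (∫⁻ x, (A x * c) ^ p.toReal ∂μ) ^ (1 / p.toReal) =
      (∫⁻ x, A x ^ p.toReal ∂μ) ^ (1 / p.toReal) * c
    calc (∫⁻ x, (A x * c) ^ p.toReal ∂μ) ^ (1 / p.toReal)
        = ((∫⁻ x, A x ^ p.toReal ∂μ) * c ^ p.toReal) ^ (1 / p.toReal) := by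
          rw [← lintegral_mul_const' (c ^ p.toReal) _
            (ENNReal.rpow_ne_top_of_nonneg he.le hc)]
          congr 1
          exact lintegral_congr fun x => ENNReal.mul_rpow_of_nonneg _ _ he.le
      _ = (∫⁻ x, A x ^ p.toReal ∂μ) ^ (1 / p.toReal) * c := by
          rw [ENNReal.mul_rpow_of_nonneg _ _ (by positivity), ← ENNReal.rpow_mul,
            mul_one_div, div_self he.ne', ENNReal.rpow_one]

lemma eNorm_rpow {u : ℝ≥0∞} (hu : u ≠ 0) {c : ℝ} (hc : 0 < c) (A : α → ℝ≥0∞) :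
    eNorm μ u (fun x => A x ^ c) = eNorm μ (u * ENNReal.ofReal c) A ^ c := by
  have hoc0 : ENNReal.ofReal c ≠ 0 := (ENNReal.ofReal_pos.mpr hc).ne'
  by_cases hut : u = ∞
  · have h2 : u * ENNReal.ofReal c = ∞ := by rw [hut]; exact ENNReal.top_mul hoc0
    rw [eNorm, eNorm, if_pos hut, if_pos h2]
    have := OrderIso.essSup_apply (g := ENNReal.orderIsoRpow c hc) A μ
    simpa [ENNReal.orderIsoRpow, Function.comp] using this.symm
  · have h2 : u * ENNReal.ofReal c ≠ ∞ := ENNReal.mul_ne_top hut ENNReal.ofReal_ne_top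
    have hu0 : 0 < u.toReal := ENNReal.toReal_pos hu hut
    rw [eNorm, eNorm, if_neg hut, if_neg h2]
    have htc : (u * ENNReal.ofReal c).toReal = u.toReal * c := by
      rw [ENNReal.toReal_mul, ENNReal.toReal_ofReal hc.le]
    rw [htc, ← ENNReal.rpow_mul]
    have hl : ∫⁻ x, (A x ^ c) ^ u.toReal ∂μ = ∫⁻ x, A x ^ (u.toReal * c) ∂μ :=
      lintegral_congr fun x => by rw [← ENNReal.rpow_mul, mul_comm]
    rw [hl]
    congr 1
    field_simp

lemma lintegral_mul_le_eNorm {u v : ℝ≥0∞} (hu : 1 ≤ u) (hv : 1 ≤ v) (huv : 1/u + 1/v = 1)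
    {A B : α → ℝ≥0∞} (hA : AEMeasurable A μ) (hB : AEMeasurable B μ) :
    ∫⁻ x, A x * B x ∂μ ≤ eNorm μ u A * eNorm μ v B := by
  have hu0 : u ≠ 0 := (zero_lt_one.trans_le hu).ne'
  have hv0 : v ≠ 0 := (zero_lt_one.trans_le hv).ne'
  by_cases hut : u = ∞
  · have hv1 : v = 1 := by
      rw [hut] at huv
      simp only [one_div, ENNReal.inv_top, zero_add] at huv
      simpa using congrArg Inv.inv huv
    subst hv1
    calc ∫⁻ x, A x * B x ∂μ ≤ ∫⁻ x, essSup A μ * B x ∂μ :=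
          lintegral_mono_ae ((ENNReal.ae_le_essSup A).mono fun x hx => mul_le_mul_left hx _)
      _ = essSup A μ * ∫⁻ x, B x ∂μ := lintegral_const_mul'' _ hB
      _ ≤ _ := by
          rw [eNorm, eNorm, if_pos hut, if_neg (by norm_num : (1:ℝ≥0∞) ≠ ∞)]
          simp
  by_cases hvt : v = ∞
  · have hu1 : u = 1 := by
      rw [hvt] at huv
      simp only [one_div, ENNReal.inv_top, add_zero] at huv
      simpa using congrArg Inv.inv huv
    subst hu1
    calc ∫⁻ x, A x * B x ∂μ ≤ ∫⁻ x, A x * essSup B μ ∂μ :=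
          lintegral_mono_ae ((ENNReal.ae_le_essSup B).mono fun x hx => mul_le_mul_right hx _)
      _ = (∫⁻ x, A x ∂μ) * essSup B μ := lintegral_mul_const'' _ hA
      _ ≤ _ := by
          rw [eNorm, eNorm, if_pos hvt, if_neg (by norm_num : (1:ℝ≥0∞) ≠ ∞)]
          simp
  · have hu1 : 1 < u := by
      rcases hu.lt_or_eq with h | h
      · exact h
      · exfalso
        rw [← h] at huv
        have h0 : (1:ℝ≥0∞) + 1/v = 1 + 0 := by simpa using huv
        have := (ENNReal.add_right_inj (by norm_num : (1:ℝ≥0∞) ≠ ∞)).mp h0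
        rw [one_div, ENNReal.inv_eq_zero] at this
        exact hvt this
    have hpq : u.toReal.HolderConjugate v.toReal := by
      rw [Real.holderConjugate_iff]
      constructor
      · rw [← ENNReal.toReal_one]
        exact (ENNReal.toReal_lt_toReal (by norm_num) hut).mpr hu1
      · have h1 : (1/u).toReal + (1/v).toReal = 1 := by
          rw [← ENNReal.toReal_add (by simp [one_div, ENNReal.inv_ne_top, hu0])
            (by simp [one_div, ENNReal.inv_ne_top, hv0]), huv, ENNReal.toReal_one]
        simpa [one_div, ENNReal.toReal_inv] using h1
    have := ENNReal.lintegral_mul_le_Lp_mul_Lq μ hpq hA hB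
    rw [eNorm, eNorm, if_neg hut, if_neg hvt]
    simpa using this

end EnormAux

section Translate

variable {d : ℕ}

lemma measurePreserving_sub_left' (x : Ed d) :
    MeasurePreserving (fun t => x - t) (volume : Measure (Ed d)) volume := by
  simp_rw [sub_eq_add_neg]
  exact (measurePreserving_add_left volume x).comp (Measure.measurePreserving_neg volume)

lemma lintegral_translate (F : Ed d → ℝ≥0∞) (hF : Measurable F) (t : Ed d) :
    ∫⁻ x, F (x - t) = ∫⁻ x, F x :=
  (measurePreserving_sub_right volume t).lintegral_comp hF

lemma lintegral_translate_left (F : Ed d → ℝ≥0∞) (hF : Measurable F) (x : Ed d) :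
    ∫⁻ t, F (x - t) = ∫⁻ y, F y :=
  (measurePreserving_sub_left' x).lintegral_comp hF

lemma ae_translate {F G : Ed d → ℝ≥0∞} (h : F =ᵐ[volume] G) (t : Ed d) :
    (fun x => F (x - t)) =ᵐ[volume] fun x => G (x - t) :=
  (measurePreserving_sub_right volume t).quasiMeasurePreserving.ae_eq_comp h

lemma essSup_translate (F : Ed d → ℝ≥0∞) (hF : AEMeasurable F volume) (t : Ed d) :
    essSup (fun x => F (x - t)) volume = essSup F volume := by
  have h := measurePreserving_sub_right (volume : Measure (Ed d)) t
  have h2 := essSup_map_measure (g := F) (f := fun x => x - t) (μ := volume)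
    (by rw [h.map_eq]; exact hF) h.measurable.aemeasurable
  rw [h.map_eq] at h2
  rw [h2]; rfl

lemma eNorm_translate {F : Ed d → ℝ≥0∞} (hF : Measurable F) (p : ℝ≥0∞) (t : Ed d) :
    eNorm volume p (fun x => F (x - t)) = eNorm volume p F := by
  unfold eNorm
  split_ifs
  · exact essSup_translate F hF.aemeasurable t
  · congr 1
    exact lintegral_translate (fun y => F y ^ p.toReal) (hF.pow_const _) t

end Translate

section Young

variable {d : ℕ}

lemma young1 {F H : Ed d → ℝ≥0∞} (hF : Measurable F) (hH : Measurable H)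
    {a b c : ℝ≥0∞} (hb : 1 ≤ b) (hc : 1 ≤ c) (habc : 1/b + 1/c = 1 + 1/a) :
    eNorm volume a (fun t => ∫⁻ x, F (x - t) * H x) ≤
      eNorm volume b F * eNorm volume c H := by
  have hb0 : b ≠ 0 := (zero_lt_one.trans_le hb).ne'
  have hc0 : c ≠ 0 := (zero_lt_one.trans_le hc).ne'
  by_cases hat : a = ∞
  · rw [eNorm, if_pos hat]
    have huv : 1/b + 1/c = 1 := by rw [habc, hat]; simp
    refine essSup_le_of_ae_le _ (Filter.Eventually.of_forall fun t => ?_)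
    calc ∫⁻ x, F (x - t) * H x
        ≤ eNorm volume b (fun x => F (x - t)) * eNorm volume c H :=
          lintegral_mul_le_eNorm hb hc huv
            (hF.comp (measurable_id.sub measurable_const)).aemeasurable hH.aemeasurable
      _ = _ := by rw [eNorm_translate hF]
  · -- a is finite
    have ha1 : 1 ≤ a := by
      have h2 : (1:ℝ≥0∞) + 1/a ≤ 1 + 1 := by
        rw [← habc]
        exact add_le_add (by simpa [one_div] using ENNReal.inv_le_one.mpr hb)
          (by simpa [one_div] using ENNReal.inv_le_one.mpr hc)
      have h3 : 1/a ≤ 1 := (ENNReal.add_le_add_iff_left (by norm_num)).mp h2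
      rwa [one_div, ENNReal.inv_le_one] at h3
    have ha0 : a ≠ 0 := (zero_lt_one.trans_le ha1).ne'
    have hbt : b ≠ ∞ := by
      intro h
      rw [h] at habc
      have h1c : (1:ℝ≥0∞) + 1/a ≤ 1 + 0 := by
        rw [← habc]
        simpa [one_div] using ENNReal.inv_le_one.mpr hc
      have := (ENNReal.add_le_add_iff_left (by norm_num : (1:ℝ≥0∞) ≠ ∞)).mp h1c
      exact hat (by rwa [one_div, le_zero_iff, ENNReal.inv_eq_zero] at this)
    have hct : c ≠ ∞ := by
      intro h
      rw [h] at habc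
      have h1c : (1:ℝ≥0∞) + 1/a ≤ 1 + 0 := by
        rw [← habc]
        simpa [one_div] using ENNReal.inv_le_one.mpr hb
      have := (ENNReal.add_le_add_iff_left (by norm_num : (1:ℝ≥0∞) ≠ ∞)).mp h1c
      exact hat (by rwa [one_div, le_zero_iff, ENNReal.inv_eq_zero] at this)
    by_cases hF0 : eNorm volume b F = 0
    · have hFz : F =ᵐ[volume] 0 := eNorm_ae_zero hb0 hF.aemeasurable hF0
      have hfun : (fun t => ∫⁻ x, F (x - t) * H x) = fun _ => (0:ℝ≥0∞) := by
        funext t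
        rw [← lintegral_zero]
        refine lintegral_congr_ae ?_
        filter_upwards [ae_translate hFz t] with x hx
        have hx' : F (x - t) = 0 := hx
        simp [hx']
      rw [hfun, eNorm_zero_fun ha0]
      exact zero_le
    by_cases hH0 : eNorm volume c H = 0
    · have hHz : H =ᵐ[volume] 0 := eNorm_ae_zero hc0 hH.aemeasurable hH0
      have hfun : (fun t => ∫⁻ x, F (x - t) * H x) = fun _ => (0:ℝ≥0∞) := by
        funext t
        rw [← lintegral_zero]
        refine lintegral_congr_ae ?_
        filter_upwards [hHz] with x hx
        have hx' : H x = 0 := hx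
        simp [hx']
      rw [hfun, eNorm_zero_fun ha0]
      exact zero_le
    by_cases hFt : eNorm volume b F = ∞
    · rw [hFt, ENNReal.top_mul hH0]; exact le_top
    by_cases hHt : eNorm volume c H = ∞
    · rw [hHt, ENNReal.mul_top hF0]; exact le_top
    -- the main finite case
    have hatr : 0 < a.toReal := ENNReal.toReal_pos ha0 hat
    set β := b.toReal with hβdef
    set γ := c.toReal with hγdef
    have hβ1 : 1 ≤ β := by
      rw [hβdef, ← ENNReal.toReal_one]
      exact (ENNReal.toReal_le_toReal (by norm_num) hbt).mpr hb
    have hγ1 : 1 ≤ γ := by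
      rw [hγdef, ← ENNReal.toReal_one]
      exact (ENNReal.toReal_le_toReal (by norm_num) hct).mpr hc
    have hβ0 : (0:ℝ) < β := lt_of_lt_of_le one_pos hβ1
    have hγ0 : (0:ℝ) < γ := lt_of_lt_of_le one_pos hγ1
    have harel : 1/β + 1/γ = 1 + 1/a.toReal := by
      have h0 := congrArg ENNReal.toReal habc
      rwa [ENNReal.toReal_add (by simp [one_div, ENNReal.inv_ne_top, hb0])
          (by simp [one_div, ENNReal.inv_ne_top, hc0]),
        ENNReal.toReal_add (by norm_num) (by simp [one_div, ENNReal.inv_ne_top, ha0]),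
        ENNReal.toReal_div, ENNReal.toReal_div, ENNReal.toReal_div, ENNReal.toReal_one] at h0
    set w₁ : ℝ := 1/a.toReal with hw₁def
    set w₂ : ℝ := 1 - 1/γ with hw₂def
    set w₃ : ℝ := 1 - 1/β with hw₃def
    have hw₁ : 0 < w₁ := by rw [hw₁def]; positivity
    have hw₂ : 0 ≤ w₂ := by
      rw [hw₂def, sub_nonneg, div_le_one hγ0]; exact hγ1
    have hw₃ : 0 ≤ w₃ := by
      rw [hw₃def, sub_nonneg, div_le_one hβ0]; exact hβ1
    have hw12 : w₁ + w₂ = 1/β := by rw [hw₁def, hw₂def]; linarith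
    have hw13 : w₁ + w₃ = 1/γ := by rw [hw₁def, hw₃def]; linarith
    have hNF : eNorm volume b F = (∫⁻ x, F x ^ β) ^ (1/β) := by rw [eNorm, if_neg hbt]
    have hNH : eNorm volume c H = (∫⁻ x, H x ^ γ) ^ (1/γ) := by rw [eNorm, if_neg hct]
    set Ib := ∫⁻ x, F x ^ β with hIbdef
    set Ic := ∫⁻ x, H x ^ γ with hIcdef
    have hIb0 : Ib ≠ 0 := by
      intro h0
      exact hF0 (by rw [hNF, h0, ENNReal.zero_rpow_of_pos (by positivity)])
    have hIbt : Ib ≠ ∞ := by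
      intro h0
      exact hFt (by rw [hNF, h0, ENNReal.top_rpow_of_pos (by positivity)])
    have hIc0 : Ic ≠ 0 := by
      intro h0
      exact hH0 (by rw [hNH, h0, ENNReal.zero_rpow_of_pos (by positivity)])
    have hIct : Ic ≠ ∞ := by
      intro h0
      exact hHt (by rw [hNH, h0, ENNReal.top_rpow_of_pos (by positivity)])
    set Ψ : Ed d → ℝ≥0∞ := fun t => ∫⁻ x, F (x - t) ^ β * H x ^ γ with hΨdef
    have comb : ∀ (Z : ℝ≥0∞) (su uu : ℝ), 0 ≤ su → 0 ≤ uu → su + uu = 1 →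
        Z ^ su * Z ^ uu = Z := by
      intro Z su uu hsu huu hsum
      rw [← ENNReal.rpow_add_of_nonneg su uu hsu huu, hsum, ENNReal.rpow_one]
    have e1 : β * w₁ + β * w₂ = 1 := by
      rw [← mul_add, hw12]; field_simp
    have e2 : γ * w₁ + γ * w₃ = 1 := by
      rw [← mul_add, hw13]; field_simp
    have hpt : ∀ X Y : ℝ≥0∞, (X ^ β * Y ^ γ) ^ w₁ * (X ^ β) ^ w₂ * (Y ^ γ) ^ w₃ = X * Y := by
      intro X Y
      rw [ENNReal.mul_rpow_of_nonneg _ _ hw₁.le, ← ENNReal.rpow_mul, ← ENNReal.rpow_mul,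
        ← ENNReal.rpow_mul, ← ENNReal.rpow_mul, mul_assoc, mul_mul_mul_comm,
        comb X _ _ (by positivity) (by positivity) e1,
        comb Y _ _ (by positivity) (by positivity) e2]
    have key : ∀ t, (∫⁻ x, F (x - t) * H x) ≤ Ψ t ^ w₁ * Ib ^ w₂ * Ic ^ w₃ := by
      intro t
      have hFt' : Measurable fun x : Ed d => F (x - t) :=
        hF.comp (measurable_id.sub measurable_const)
      have h3 := ENNReal.lintegral_prod_norm_pow_le (μ := (volume : Measure (Ed d)))
        Finset.univ
        (f := ![fun x => F (x - t) ^ β * H x ^ γ, fun x => F (x - t) ^ β, fun x => H x ^ γ])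
        (fun i _ => by
          fin_cases i
          · exact ((hFt'.pow_const β).mul (hH.pow_const γ)).aemeasurable
          · exact (hFt'.pow_const β).aemeasurable
          · exact (hH.pow_const γ).aemeasurable)
        (p := ![w₁, w₂, w₃])
        (by
          rw [Fin.sum_univ_three]
          show w₁ + w₂ + w₃ = 1
          rw [hw₂def, hw₃def]; linarith [harel])
        (fun i _ => by fin_cases i
                       · exact hw₁.le
                       · exact hw₂
                       · exact hw₃)
      simp only [Fin.prod_univ_three, Matrix.cons_val_zero, Matrix.cons_val_one,
        Matrix.head_cons, Matrix.cons_val_two, Matrix.tail_cons] at h3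
      calc ∫⁻ x, F (x - t) * H x
          = ∫⁻ x, (F (x - t) ^ β * H x ^ γ) ^ w₁ * (F (x - t) ^ β) ^ w₂ * (H x ^ γ) ^ w₃ :=
            lintegral_congr fun x => (hpt _ _).symm
        _ ≤ (∫⁻ x, F (x - t) ^ β * H x ^ γ) ^ w₁ * (∫⁻ x, F (x - t) ^ β) ^ w₂ *
              (∫⁻ x, H x ^ γ) ^ w₃ := h3
        _ = Ψ t ^ w₁ * Ib ^ w₂ * Ic ^ w₃ := by
            rw [lintegral_translate (fun y => F y ^ β) (hF.pow_const _) t]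
    have hΨmeas : Measurable Ψ := by
      have hk : Measurable fun p : Ed d × Ed d => F (p.2 - p.1) ^ β * H p.2 ^ γ := by
        exact ((hF.comp (measurable_snd.sub measurable_fst)).pow_const β).mul
          ((hH.comp measurable_snd).pow_const γ)
      exact hk.lintegral_prod_right'
    have hΨint : ∫⁻ t, Ψ t = Ib * Ic := by
      have hk : AEMeasurable (Function.uncurry fun t x : Ed d => F (x - t) ^ β * H x ^ γ)
          ((volume : Measure (Ed d)).prod volume) := by
        exact (((hF.comp (measurable_snd.sub measurable_fst)).pow_const β).mul
          ((hH.comp measurable_snd).pow_const γ)).aemeasurable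
      rw [hΨdef]
      rw [lintegral_lintegral_swap (f := fun t x : Ed d => F (x - t) ^ β * H x ^ γ) hk]
      have hx : ∀ x : Ed d, (∫⁻ t, F (x - t) ^ β * H x ^ γ) = Ib * H x ^ γ := by
        intro x
        have h2 : AEMeasurable (fun t : Ed d => F (x - t) ^ β) volume := by
          exact ((hF.comp (measurable_const.sub measurable_id)).pow_const β).aemeasurable
        rw [lintegral_mul_const'' _ h2,
          lintegral_translate_left (fun y => F y ^ β) (hF.pow_const _) x]
      rw [lintegral_congr hx, lintegral_const_mul' Ib _ hIbt]
    rw [eNorm, if_neg hat]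
    refine le_trans (ENNReal.rpow_le_rpow (lintegral_mono fun t =>
      ENNReal.rpow_le_rpow (key t) hatr.le) (by positivity)) ?_
    have hstep : ∀ t, (Ψ t ^ w₁ * Ib ^ w₂ * Ic ^ w₃) ^ a.toReal
        = Ψ t * (Ib ^ w₂ * Ic ^ w₃) ^ a.toReal := by
      intro t
      rw [mul_assoc, ENNReal.mul_rpow_of_nonneg _ _ hatr.le, ← ENNReal.rpow_mul, hw₁def,
        one_div, inv_mul_cancel₀ hatr.ne', ENNReal.rpow_one]
    refine le_of_eq ?_
    calc (∫⁻ t, (Ψ t ^ w₁ * Ib ^ w₂ * Ic ^ w₃) ^ a.toReal) ^ (1/a.toReal)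
        = ((∫⁻ t, Ψ t) * (Ib ^ w₂ * Ic ^ w₃) ^ a.toReal) ^ (1/a.toReal) := by
          rw [lintegral_congr hstep, lintegral_mul_const'' _ hΨmeas.aemeasurable]
      _ = (Ib * Ic) ^ w₁ * (Ib ^ w₂ * Ic ^ w₃) := by
          rw [hΨint, ENNReal.mul_rpow_of_nonneg _ _ (by positivity), ← ENNReal.rpow_mul,
            mul_one_div, div_self hatr.ne', ENNReal.rpow_one, hw₁def]
      _ = Ib ^ (1/β) * Ic ^ (1/γ) := by
          rw [ENNReal.mul_rpow_of_nonneg _ _ hw₁.le, mul_mul_mul_comm,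
            ← ENNReal.rpow_add _ _ hIb0 hIbt, ← ENNReal.rpow_add _ _ hIc0 hIct, hw12, hw13]
      _ = eNorm volume b F * eNorm volume c H := by rw [hNF, hNH]


lemma youngY {d : ℕ} {F H : Ed d → ℝ≥0∞} (hF : Measurable F) (hH : Measurable H)
    {r₀ p r s : ℝ≥0∞} (h1 : 1 ≤ r₀) (h2 : r₀ ≤ p) (h3 : p ≤ r)
    (hs : 1/s + 1/p = 1/r₀ + 1/r) :
    eNorm volume r (fun t => eNorm volume r₀ (fun x => F (x - t) * H x))
      ≤ eNorm volume s H * eNorm volume p F := by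
  have hr₀0 : r₀ ≠ 0 := (zero_lt_one.trans_le h1).ne'
  have hp1 : 1 ≤ p := h1.trans h2
  have hr1 : 1 ≤ r := hp1.trans h3
  have hp0 : p ≠ 0 := (zero_lt_one.trans_le hp1).ne'
  have hr0 : r ≠ 0 := (zero_lt_one.trans_le hr1).ne'
  have hsr₀ : r₀ ≤ s := by
    have hrp : 1/r ≤ 1/p := by
      rw [one_div, one_div]; exact ENNReal.inv_le_inv.mpr h3
    have h4 : 1/s + 1/p ≤ 1/r₀ + 1/p := by
      rw [hs]; exact add_le_add_right hrp _
    have h5 : 1/s ≤ 1/r₀ :=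
      (ENNReal.add_le_add_iff_right (by simp [one_div, ENNReal.inv_ne_top, hp0])).mp h4
    rw [one_div, one_div] at h5
    exact ENNReal.inv_le_inv.mp h5
  have hs1 : 1 ≤ s := h1.trans hsr₀
  have hs0 : s ≠ 0 := (zero_lt_one.trans_le hs1).ne'
  by_cases hr₀t : r₀ = ∞
  · -- then p = r = s = ∞
    have hpt : p = ∞ := top_le_iff.mp (hr₀t ▸ h2)
    have hrt : r = ∞ := top_le_iff.mp (hpt ▸ h3)
    have hst : s = ∞ := by
      have h0 : 1/s = 0 := by
        have := hs
        rw [hpt, hr₀t, hrt] at this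
        simpa using this
      rwa [one_div, ENNReal.inv_eq_zero] at h0
    rw [hst, hpt, hrt]
    simp only [eNorm, if_pos (rfl : (∞:ℝ≥0∞) = ∞), if_pos hr₀t]
    refine essSup_le_of_ae_le _ (Filter.Eventually.of_forall fun t => ?_)
    show essSup (fun x => F (x - t) * H x) volume ≤ essSup H volume * essSup F volume
    calc essSup (fun x => F (x - t) * H x) volume
        ≤ essSup (fun x => F (x - t)) volume * essSup H volume :=
          ENNReal.essSup_mul_le _ _
      _ = essSup F volume * essSup H volume := by
          rw [essSup_translate F hF.aemeasurable t]
      _ = essSup H volume * essSup F volume := mul_comm _ _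
  · have hc₀ : 0 < r₀.toReal := ENNReal.toReal_pos hr₀0 hr₀t
    set c₀ := r₀.toReal with hc₀def
    have hofc : ENNReal.ofReal c₀ = r₀ := by
      rw [hc₀def, ENNReal.ofReal_toReal hr₀t]
    have hofci : ENNReal.ofReal (1/c₀) = r₀⁻¹ := by
      rw [one_div, ENNReal.ofReal_inv_of_pos hc₀, hofc]
    -- rewrite the inner norm
    have hinner : (fun t => eNorm volume r₀ (fun x => F (x - t) * H x))
        = fun t => (∫⁻ x, F (x - t) ^ c₀ * H x ^ c₀) ^ (1/c₀) := by
      funext t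
      rw [eNorm, if_neg hr₀t]
      congr 1
      exact lintegral_congr fun x => ENNReal.mul_rpow_of_nonneg _ _ hc₀.le
    rw [hinner]
    have hLHS := eNorm_rpow (μ := (volume : Measure (Ed d))) hr0
      (one_div_pos.mpr hc₀) (fun t => ∫⁻ x, F (x - t) ^ c₀ * H x ^ c₀)
    rw [hLHS, hofci]
    have hdivr : r * r₀⁻¹ = r / r₀ := rfl
    rw [hdivr]
    -- apply young1
    have hinv : ∀ x : ℝ≥0∞, x ≠ 0 → 1/(x/r₀) = r₀ * (1/x) := by
      intro x hx0
      rw [one_div, one_div, div_eq_mul_inv,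
        ENNReal.mul_inv (Or.inr (ENNReal.inv_ne_top.mpr hr₀0)) (Or.inr (ENNReal.inv_ne_zero.mpr hr₀t)),
        inv_inv, mul_comm]
    have hb1 : 1 ≤ p / r₀ := by
      rw [ENNReal.le_div_iff_mul_le (Or.inl hr₀0) (Or.inl hr₀t), one_mul]
      exact h2
    have hcc1 : 1 ≤ s / r₀ := by
      rw [ENNReal.le_div_iff_mul_le (Or.inl hr₀0) (Or.inl hr₀t), one_mul]
      exact hsr₀
    have habc : 1/(p/r₀) + 1/(s/r₀) = 1 + 1/(r/r₀) := by
      have hmul := congrArg (fun z => r₀ * z) hs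
      simp only [mul_add] at hmul
      rw [hinv p hp0, hinv s hs0, hinv r hr0, add_comm (r₀ * (1/p)), hmul,
        one_div, ENNReal.mul_inv_cancel hr₀0 hr₀t]
    have hY := young1 (hF.pow_const c₀) (hH.pow_const c₀) hb1 hcc1 habc
    calc (eNorm volume (r/r₀) fun t => ∫⁻ x, F (x - t) ^ c₀ * H x ^ c₀) ^ (1/c₀)
        ≤ (eNorm volume (p/r₀) (fun x => F x ^ c₀) *
            eNorm volume (s/r₀) (fun x => H x ^ c₀)) ^ (1/c₀) :=
          ENNReal.rpow_le_rpow hY (by positivity)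
      _ = (eNorm volume (p/r₀) (fun x => F x ^ c₀)) ^ (1/c₀) *
            (eNorm volume (s/r₀) (fun x => H x ^ c₀)) ^ (1/c₀) :=
          ENNReal.mul_rpow_of_nonneg _ _ (by positivity)
      _ = eNorm volume p F * eNorm volume s H := by
          have hbne : p / r₀ ≠ 0 := (zero_lt_one.trans_le hb1).ne'
          have hcne : s / r₀ ≠ 0 := (zero_lt_one.trans_le hcc1).ne'
          rw [eNorm_rpow hbne hc₀ F, eNorm_rpow hcne hc₀ H, hofc,
            ENNReal.div_mul_cancel hr₀0 hr₀t, ENNReal.div_mul_cancel hr₀0 hr₀t,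
            ← ENNReal.rpow_mul, ← ENNReal.rpow_mul, mul_one_div, div_self hc₀.ne',
            ENNReal.rpow_one, ENNReal.rpow_one]
      _ = eNorm volume s H * eNorm volume p F := mul_comm _ _


end Young

lemma eNorm_nnnorm_eq_eLpNorm {α : Type*} [MeasurableSpace α] {μ : Measure α}
    {E : Type*} [NormedAddCommGroup E] (f : α → E) {p : ℝ≥0∞} (hp : p ≠ 0) :
    eNorm μ p (fun x => (‖f x‖₊ : ℝ≥0∞)) = eLpNorm f p μ := by
  by_cases ht : p = ∞
  · rw [ht, eNorm, if_pos rfl, eLpNorm_exponent_top]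
    rfl
  · rw [eNorm, if_neg ht, eLpNorm_eq_eLpNorm' hp ht]
    rfl

/-- the case `m = 2` of the Young-type inequality of Lemma `lemma:Young1`. -/
theorem stmt5 (d : ℕ) (hd : 1 ≤ d) (p₀ p₁ p₂ r₀ r₁ r₂ : ℝ≥0∞)
    (hp₀ : 1 ≤ p₀) (hp₁ : 1 ≤ p₁) (hp₂ : 1 ≤ p₂)
    (hr₀ : 1 ≤ r₀) (hr₁ : 1 ≤ r₁) (hr₂ : 1 ≤ r₂)
    (h11 : p₁ ≤ r₁) (h22 : p₂ ≤ r₂) (h01 : r₀ ≤ p₁)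
    (hA2 : (1 / p₁).toReal - (1 / r₁).toReal ≤ (1 / r₀).toReal - (1 / p₂).toReal)
    (hA3 : ((1 / p₁).toReal - (1 / r₁).toReal) + ((1 / p₂).toReal - (1 / r₂).toReal)
        = (1 / r₀).toReal - (1 / p₀).toReal)
    (f₁ f₂ g : Ed d → ℂ)
    (hf₁ : MemLp f₁ p₁ volume) (hf₂ : MemLp f₂ p₂ volume) (hg : MemLp g p₀ volume) :
    eNorm volume r₂ (fun t₂ => eNorm volume r₁ (fun t₁ => eNorm volume r₀ (fun x =>
        (‖f₁ (x - t₁) * f₂ (x - t₂) * g x‖₊ : ℝ≥0∞))))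
      ≤ eLpNorm g p₀ volume * eLpNorm f₁ p₁ volume * eLpNorm f₂ p₂ volume := by
  classical
  have hn₁ : AEMeasurable (fun x => (‖f₁ x‖₊ : ℝ≥0∞)) volume := hf₁.aestronglyMeasurable.enorm
  have hn₂ : AEMeasurable (fun x => (‖f₂ x‖₊ : ℝ≥0∞)) volume := hf₂.aestronglyMeasurable.enorm
  have hn₀ : AEMeasurable (fun x => (‖g x‖₊ : ℝ≥0∞)) volume := hg.aestronglyMeasurable.enorm
  set F₁ := hn₁.mk _ with hF₁def
  have hF₁ : Measurable F₁ := hn₁.measurable_mk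
  have he₁ : (fun x => (‖f₁ x‖₊ : ℝ≥0∞)) =ᵐ[volume] F₁ := hn₁.ae_eq_mk
  set F₂ := hn₂.mk _ with hF₂def
  have hF₂ : Measurable F₂ := hn₂.measurable_mk
  have he₂ : (fun x => (‖f₂ x‖₊ : ℝ≥0∞)) =ᵐ[volume] F₂ := hn₂.ae_eq_mk
  set Gm := hn₀.mk _ with hGmdef
  have hGm : Measurable Gm := hn₀.measurable_mk
  have he₀ : (fun x => (‖g x‖₊ : ℝ≥0∞)) =ᵐ[volume] Gm := hn₀.ae_eq_mk
  -- exponent bookkeeping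
  have inv_le_one' : ∀ {x : ℝ≥0∞}, 1 ≤ x → 1/x ≤ 1 := fun {x} hx => by
    rw [one_div]; exact ENNReal.inv_le_one.mpr hx
  have inv_ne_top' : ∀ {x : ℝ≥0∞}, 1 ≤ x → 1/x ≠ ∞ := fun {x} hx =>
    (lt_of_le_of_lt (inv_le_one' hx) ENNReal.one_lt_top).ne
  have h1p₁r₀ : 1/p₁ ≤ 1/r₀ := by rw [one_div, one_div]; exact ENNReal.inv_le_inv.mpr h01
  have h1r₁p₁ : 1/r₁ ≤ 1/p₁ := by rw [one_div, one_div]; exact ENNReal.inv_le_inv.mpr h11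
  set q : ℝ≥0∞ := ((1/r₀ - 1/p₁) + 1/r₁)⁻¹ with hqdef
  have h1q : 1/q = (1/r₀ - 1/p₁) + 1/r₁ := by rw [hqdef, one_div, inv_inv]
  have hq1 : 1 ≤ q := by
    have hX : (1/r₀ - 1/p₁) + 1/r₁ ≤ 1 :=
      le_trans (add_le_add_right h1r₁p₁ _)
        (by rw [tsub_add_cancel_of_le h1p₁r₀]; exact inv_le_one' hr₀)
    calc (1:ℝ≥0∞) = 1⁻¹ := by rw [inv_one]
      _ ≤ ((1/r₀ - 1/p₁) + 1/r₁)⁻¹ := ENNReal.inv_le_inv.mpr hX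
  have hs₁ : 1/q + 1/p₁ = 1/r₀ + 1/r₁ := by
    rw [h1q, add_right_comm, tsub_add_cancel_of_le h1p₁r₀]
  have hsub_ne : 1/r₀ - 1/p₁ ≠ ∞ := ne_top_of_le_ne_top (inv_ne_top' hr₀) tsub_le_self
  have h1qtr : (1/q).toReal = (1/r₀).toReal - (1/p₁).toReal + (1/r₁).toReal := by
    rw [h1q, ENNReal.toReal_add hsub_ne (inv_ne_top' hr₁),
      ENNReal.toReal_sub_of_le h1p₁r₀ (inv_ne_top' hr₀)]
  have hqp₂ : q ≤ p₂ := by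
    have hle : 1/p₂ ≤ 1/q := by
      rw [← ENNReal.toReal_le_toReal (inv_ne_top' hp₂) (inv_ne_top' hq1), h1qtr]
      linarith [hA2]
    rw [one_div, one_div] at hle
    exact ENNReal.inv_le_inv.mp hle
  have hs₂ : 1/p₀ + 1/p₂ = 1/q + 1/r₂ := by
    rw [← ENNReal.toReal_eq_toReal_iff'
      (ENNReal.add_ne_top.mpr ⟨inv_ne_top' hp₀, inv_ne_top' hp₂⟩)
      (ENNReal.add_ne_top.mpr ⟨inv_ne_top' hq1, inv_ne_top' hr₂⟩),
      ENNReal.toReal_add (inv_ne_top' hp₀) (inv_ne_top' hp₂),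
      ENNReal.toReal_add (inv_ne_top' hq1) (inv_ne_top' hr₂), h1qtr]
    linarith [hA3]
  -- norms of the measurable representatives
  have hC₁eq : eNorm volume p₁ F₁ = eLpNorm f₁ p₁ volume :=
    (eNorm_congr_ae he₁.symm).trans
      (eNorm_nnnorm_eq_eLpNorm f₁ (zero_lt_one.trans_le hp₁).ne')
  have hC₂eq : eNorm volume p₂ F₂ = eLpNorm f₂ p₂ volume :=
    (eNorm_congr_ae he₂.symm).trans
      (eNorm_nnnorm_eq_eLpNorm f₂ (zero_lt_one.trans_le hp₂).ne')
  have hC₀eq : eNorm volume p₀ Gm = eLpNorm g p₀ volume :=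
    (eNorm_congr_ae he₀.symm).trans
      (eNorm_nnnorm_eq_eLpNorm g (zero_lt_one.trans_le hp₀).ne')
  -- replace the integrand by the measurable representatives
  have hstepA : (fun t₂ => eNorm volume r₁ fun t₁ => eNorm volume r₀ fun x =>
      (‖f₁ (x - t₁) * f₂ (x - t₂) * g x‖₊ : ℝ≥0∞))
      = fun t₂ => eNorm volume r₁ fun t₁ => eNorm volume r₀ fun x =>
        F₁ (x - t₁) * (F₂ (x - t₂) * Gm x) := by
    funext t₂
    refine congrArg (eNorm volume r₁) (funext fun t₁ => ?_)
    refine eNorm_congr_ae ?_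
    filter_upwards [ae_translate he₁ t₁, ae_translate he₂ t₂, he₀] with x hx1 hx2 hx0
    have hx1' : (‖f₁ (x - t₁)‖₊ : ℝ≥0∞) = F₁ (x - t₁) := hx1
    have hx2' : (‖f₂ (x - t₂)‖₊ : ℝ≥0∞) = F₂ (x - t₂) := hx2
    have hx0' : (‖g x‖₊ : ℝ≥0∞) = Gm x := hx0
    show (‖f₁ (x - t₁) * f₂ (x - t₂) * g x‖₊ : ℝ≥0∞) = F₁ (x - t₁) * (F₂ (x - t₂) * Gm x)
    rw [nnnorm_mul, nnnorm_mul, ENNReal.coe_mul, ENNReal.coe_mul, hx1', hx2', hx0', mul_assoc]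
  rw [hstepA]
  have hH2 : ∀ t₂ : Ed d, Measurable fun x => F₂ (x - t₂) * Gm x := fun t₂ => by
    exact (hF₂.comp (measurable_id.sub measurable_const)).mul hGm
  calc eNorm volume r₂ (fun t₂ => eNorm volume r₁ fun t₁ => eNorm volume r₀ fun x =>
        F₁ (x - t₁) * (F₂ (x - t₂) * Gm x))
      ≤ eNorm volume r₂ (fun t₂ =>
          eNorm volume q (fun x => F₂ (x - t₂) * Gm x) * eNorm volume p₁ F₁) :=
        eNorm_mono fun t₂ => youngY hF₁ (hH2 t₂) hr₀ h01 h11 hs₁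
    _ ≤ eNorm volume r₂ (fun t₂ => eNorm volume q fun x => F₂ (x - t₂) * Gm x) *
          eNorm volume p₁ F₁ :=
        eNorm_mul_const_le (zero_lt_one.trans_le hr₂).ne' _ (by rw [hC₁eq]; exact hf₁.2.ne)
    _ ≤ (eNorm volume p₀ Gm * eNorm volume p₂ F₂) * eNorm volume p₁ F₁ :=
        mul_le_mul_left (youngY hF₂ hGm hq1 hqp₂ h22 hs₂) _
    _ = eLpNorm g p₀ volume * eLpNorm f₁ p₁ volume * eLpNorm f₂ p₂ volume := by
        rw [hC₀eq, hC₂eq, hC₁eq]; ring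

end
end
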